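/- Let V be a finite type, let (ξ_v)_{v ∈ V} be independent random variables on a probability space, each taking values in {0, 1} with P(ξ_v = 1) = q for a fixed q ∈ [0, 1]. Let E be a Finset of Finsets of V with every e ∈ E of cardinality p, let d_v := the number of e ∈ E with v ∈ e, and let X := Σ_{e ∈ E} Π_{v ∈ e} ξ_v. Then Var(X) ≤ |E|·(q^p − q^{2p}) + (Σ_{v ∈ V} d_v·(d_v − 1))·q^{p+1}. -/

import Mathlib

open MeasureTheory ProbabilityTheory

lemma aux_prod_int {V : Type*} {Ω : Type*} [MeasurableSpace Ω] (μ : Measure Ω)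
    [IsProbabilityMeasure μ] (ξ : V → Ω → ℝ) (hmeas : ∀ v, Measurable (ξ v))
    (hindep : iIndepFun ξ μ) (q : ℝ)
    (hEξ : ∀ v, ∫ ω, ξ v ω ∂μ = q) (s : Finset V) :
    ∫ ω, ∏ v ∈ s, ξ v ω ∂μ = q ^ s.card := by
  classical
  induction s using Finset.cons_induction with
  | empty => simp
  | cons i s hi ih =>
    have hfn : (∏ j ∈ s, ξ j) = fun ω => ∏ j ∈ s, ξ j ω := by
      funext ω; exact Finset.prod_apply ω s ξ
    have hind : IndepFun (fun ω => ∏ j ∈ s, ξ j ω) (ξ i) μ := by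
      rw [← hfn]; exact hindep.indepFun_finsetProd_of_notMem hmeas hi
    have hsm : AEStronglyMeasurable (fun ω => ∏ j ∈ s, ξ j ω) μ :=
      (Finset.measurable_prod s (fun j _ => hmeas j)).aestronglyMeasurable
    have h2 := hind.integral_mul_eq_mul_integral hsm (hmeas i).aestronglyMeasurable
    have h1 : ∫ ω, ∏ v ∈ Finset.cons i s hi, ξ v ω ∂μ
        = ∫ ω, ((fun ω => ∏ j ∈ s, ξ j ω) * ξ i) ω ∂μ := by
      congr 1; funext ω; rw [Finset.prod_cons, Pi.mul_apply]; ring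
    rw [h1, h2, ih, hEξ i, Finset.card_cons, pow_succ]

lemma aux_count {V : Type*} [Fintype V] [DecidableEq V] (E : Finset (Finset V)) :
    ∑ e ∈ E, ((E.erase e).filter (fun f => (e ∩ f).Nonempty)).card
      ≤ ∑ v : V, (E.filter (fun e => v ∈ e)).card * ((E.filter (fun e => v ∈ e)).card - 1) := by
  classical
  have step2 : ∀ e f : Finset V, (e ∩ f).card = ∑ v : V, if v ∈ e ∩ f then 1 else 0 := by
    intro e f
    rw [← Finset.card_filter]
    congr 1
    ext v; simp
  calc ∑ e ∈ E, ((E.erase e).filter (fun f => (e ∩ f).Nonempty)).card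
      ≤ ∑ e ∈ E, ∑ f ∈ E.erase e, (e ∩ f).card := by
        refine Finset.sum_le_sum fun e _ => ?_
        rw [Finset.card_filter]
        refine Finset.sum_le_sum fun f _ => ?_
        split_ifs with h
        · exact Finset.card_pos.mpr h
        · exact Nat.zero_le _
    _ = ∑ v : V, ∑ e ∈ E, ∑ f ∈ E.erase e, (if v ∈ e ∩ f then 1 else 0) := by
        simp_rw [step2]
        rw [Finset.sum_congr rfl fun e _ => Finset.sum_comm, Finset.sum_comm]
    _ ≤ ∑ v : V, (E.filter (fun e => v ∈ e)).card * ((E.filter (fun e => v ∈ e)).card - 1) := by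
        refine Finset.sum_le_sum fun v _ => ?_
        set D := E.filter (fun e => v ∈ e) with hD
        have key : ∀ e ∈ E, (∑ f ∈ E.erase e, if v ∈ e ∩ f then 1 else 0)
            = if v ∈ e then D.card - 1 else 0 := by
          intro e he
          rw [← Finset.card_filter]
          by_cases hv : v ∈ e
          · rw [if_pos hv]
            have : (E.erase e).filter (fun f => v ∈ e ∩ f) = D.erase e := by
              ext f
              simp only [hD, Finset.mem_filter, Finset.mem_erase, Finset.mem_inter, hv, true_and]
              tauto
            rw [this, Finset.card_erase_of_mem (by simp [hD, he, hv])]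
          · rw [if_neg hv]
            have : (E.erase e).filter (fun f => v ∈ e ∩ f) = ∅ := by
              ext f; simp [Finset.mem_inter, hv]
            simp only [Finset.mem_inter] at this
            simp [this]
        rw [Finset.sum_congr rfl key, ← Finset.sum_filter, ← hD, Finset.sum_const,
          smul_eq_mul]

/-- Variance bound for the edge-count `X = Σ_{e ∈ E} Π_{v ∈ e} ξ_v` of a
`p`-uniform hypergraph under independent Bernoulli(q) vertex indicators:
`Var(X) ≤ |E|·(q^p − q^{2p}) + (Σ_v d_v(d_v − 1))·q^{p+1}`. -/
theorem stmt18 {V : Type*} [Fintype V] [DecidableEq V] {Ω : Type*}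
    [MeasurableSpace Ω] (μ : Measure Ω) [IsProbabilityMeasure μ]
    (ξ : V → Ω → ℝ) (hmeas : ∀ v, Measurable (ξ v))
    (hindep : iIndepFun ξ μ)
    (hval : ∀ v ω, ξ v ω = 0 ∨ ξ v ω = 1)
    (q : ℝ) (hq0 : 0 ≤ q) (hq1 : q ≤ 1)
    (hq : ∀ v, μ {ω | ξ v ω = 1} = ENNReal.ofReal q)
    (p : ℕ) (E : Finset (Finset V)) (hE : ∀ e ∈ E, e.card = p)
    (d : V → ℕ) (hd : ∀ v, d v = (E.filter (fun e => v ∈ e)).card) :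
    (∫ ω, (∑ e ∈ E, ∏ v ∈ e, ξ v ω) ^ 2 ∂μ)
        - (∫ ω, ∑ e ∈ E, ∏ v ∈ e, ξ v ω ∂μ) ^ 2
      ≤ (E.card : ℝ) * (q ^ p - q ^ (2 * p))
        + (∑ v : V, (d v : ℝ) * ((d v : ℝ) - 1)) * q ^ (p + 1) := by
  classical
  -- basic bounds on ξ
  have h0 : ∀ v ω, 0 ≤ ξ v ω := fun v ω => by rcases hval v ω with h | h <;> simp [h]
  have h1 : ∀ v ω, ξ v ω ≤ 1 := fun v ω => by rcases hval v ω with h | h <;> simp [h]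
  -- expectation of each ξ v is q
  have hEξ : ∀ v, ∫ ω, ξ v ω ∂μ = q := by
    intro v
    have hms : MeasurableSet {ω | ξ v ω = 1} := hmeas v (measurableSet_singleton 1)
    have hfn : ξ v = Set.indicator {ω | ξ v ω = 1} (fun _ => (1:ℝ)) := by
      funext ω
      rcases hval v ω with h | h
      · rw [h, Set.indicator_apply, if_neg]; simp [h]
      · rw [h, Set.indicator_apply, if_pos]; exact h
    calc ∫ ω, ξ v ω ∂μ = ∫ ω, Set.indicator {ω | ξ v ω = 1} (fun _ => (1:ℝ)) ω ∂μ := by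
          rw [← hfn]
      _ = (μ {ω | ξ v ω = 1}).toReal := by rw [MeasureTheory.integral_indicator hms]; simp [measureReal_def]
      _ = q := by rw [hq v, ENNReal.toReal_ofReal hq0]
  -- integrability of finset products
  have hint : ∀ s : Finset V, Integrable (fun ω => ∏ v ∈ s, ξ v ω) μ := by
    intro s
    refine Integrable.mono' (integrable_const (1:ℝ))
      (Finset.measurable_prod s (fun j _ => hmeas j)).aestronglyMeasurable
      (Filter.Eventually.of_forall fun ω => ?_)
    rw [Real.norm_eq_abs, abs_of_nonneg (Finset.prod_nonneg fun v _ => h0 v ω)]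
    exact Finset.prod_le_one (fun v _ => h0 v ω) (fun v _ => h1 v ω)
  -- expectation of finset products
  have hPI : ∀ s : Finset V, ∫ ω, ∏ v ∈ s, ξ v ω ∂μ = q ^ s.card :=
    aux_prod_int μ ξ hmeas hindep q hEξ
  -- idempotence: product over e times product over f = product over union
  have hidem : ∀ (e f : Finset V) (ω : Ω),
      (∏ v ∈ e, ξ v ω) * (∏ v ∈ f, ξ v ω) = ∏ v ∈ e ∪ f, ξ v ω := by
    intro e f ω
    have hsub : e ∩ f ⊆ e ∪ f := Finset.inter_subset_left.trans Finset.subset_union_left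
    have hA : (∏ v ∈ e ∩ f, ξ v ω) * (∏ v ∈ e ∩ f, ξ v ω) = ∏ v ∈ e ∩ f, ξ v ω := by
      rw [← Finset.prod_mul_distrib]
      exact Finset.prod_congr rfl fun v _ => by rcases hval v ω with h | h <;> simp [h]
    rw [← Finset.prod_union_inter, ← Finset.prod_sdiff hsub, mul_assoc, hA]
  -- first moment
  have hEX : ∫ ω, ∑ e ∈ E, ∏ v ∈ e, ξ v ω ∂μ = ∑ e ∈ E, q ^ p := by
    rw [integral_finset_sum E (fun e _ => hint e)]
    exact Finset.sum_congr rfl fun e he => by rw [hPI e, hE e he]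
  -- second moment
  have hEX2 : ∫ ω, (∑ e ∈ E, ∏ v ∈ e, ξ v ω) ^ 2 ∂μ
      = ∑ e ∈ E, ∑ f ∈ E, q ^ (e ∪ f).card := by
    have hpt : ∀ ω, (∑ e ∈ E, ∏ v ∈ e, ξ v ω) ^ 2
        = ∑ e ∈ E, ∑ f ∈ E, ∏ v ∈ e ∪ f, ξ v ω := by
      intro ω
      rw [sq, Finset.sum_mul_sum]
      exact Finset.sum_congr rfl fun e _ => Finset.sum_congr rfl fun f _ => hidem e f ω
    calc ∫ ω, (∑ e ∈ E, ∏ v ∈ e, ξ v ω) ^ 2 ∂μ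
        = ∫ ω, ∑ e ∈ E, ∑ f ∈ E, ∏ v ∈ e ∪ f, ξ v ω ∂μ := by
          congr 1; funext ω; exact hpt ω
      _ = ∑ e ∈ E, ∑ f ∈ E, q ^ (e ∪ f).card := by
          rw [integral_finset_sum E (fun e _ => integrable_finset_sum E (fun f _ => hint (e ∪ f)))]
          refine Finset.sum_congr rfl fun e _ => ?_
          rw [integral_finset_sum E (fun f _ => hint (e ∪ f))]
          exact Finset.sum_congr rfl fun f _ => hPI (e ∪ f)
  -- variance as a double sum
  have hvar : (∫ ω, (∑ e ∈ E, ∏ v ∈ e, ξ v ω) ^ 2 ∂μ)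
      - (∫ ω, ∑ e ∈ E, ∏ v ∈ e, ξ v ω ∂μ) ^ 2
      = ∑ e ∈ E, ∑ f ∈ E, (q ^ (e ∪ f).card - q ^ (2 * p)) := by
    rw [hEX2, hEX, sq, Finset.sum_mul_sum]
    rw [← Finset.sum_sub_distrib]
    refine Finset.sum_congr rfl fun e _ => ?_
    rw [← Finset.sum_sub_distrib]
    refine Finset.sum_congr rfl fun f _ => ?_
    rw [← pow_add, two_mul]
  rw [hvar]
  -- split each inner sum into diagonal and off-diagonal parts
  have hsplit : ∀ e ∈ E, ∑ f ∈ E, (q ^ (e ∪ f).card - q ^ (2 * p))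
      = (q ^ p - q ^ (2 * p)) + ∑ f ∈ E.erase e, (q ^ (e ∪ f).card - q ^ (2 * p)) := by
    intro e he
    rw [← Finset.add_sum_erase E _ he, Finset.union_self, hE e he]
  rw [Finset.sum_congr rfl hsplit, Finset.sum_add_distrib, Finset.sum_const,
    nsmul_eq_mul]
  gcongr ?_ + ?_
  · exact le_refl _
  -- off-diagonal bound
  have hq2p : (0:ℝ) ≤ q ^ (2 * p) := pow_nonneg hq0 _
  have hqp1 : (0:ℝ) ≤ q ^ (p + 1) := pow_nonneg hq0 _
  have hterm : ∀ e ∈ E, ∀ f ∈ E.erase e,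
      q ^ (e ∪ f).card - q ^ (2 * p) ≤ if (e ∩ f).Nonempty then q ^ (p + 1) else 0 := by
    intro e he f hf
    obtain ⟨hne, hfE⟩ := Finset.mem_erase.mp hf
    by_cases hint' : (e ∩ f).Nonempty
    · rw [if_pos hint']
      have hcard : (e ∪ f).card + (e ∩ f).card = 2 * p := by
        rw [Finset.card_union_add_card_inter, hE e he, hE f hfE]; ring
      have hlt : (e ∩ f).card < p := by
        have hss : e ∩ f ⊂ e := by
          refine Finset.ssubset_iff_subset_ne.mpr ⟨Finset.inter_subset_left, fun hc => ?_⟩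
          have : e ⊆ f := by rw [← Finset.inter_eq_left]; exact hc
          exact hne (Finset.eq_of_subset_of_card_le this (by rw [hE e he, hE f hfE])).symm
        calc (e ∩ f).card < e.card := Finset.card_lt_card hss
          _ = p := hE e he
      have hle : p + 1 ≤ (e ∪ f).card := by omega
      have := pow_le_pow_of_le_one hq0 hq1 hle
      linarith
    · rw [if_neg hint']
      have hef : e ∩ f = ∅ := Finset.not_nonempty_iff_eq_empty.mp hint'
      have h2 := Finset.card_union_add_card_inter e f
      rw [hef, Finset.card_empty, hE e he, hE f hfE] at h2
      have hcard : (e ∪ f).card = 2 * p := by omega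
      rw [hcard]
      simp
  calc ∑ e ∈ E, ∑ f ∈ E.erase e, (q ^ (e ∪ f).card - q ^ (2 * p))
      ≤ ∑ e ∈ E, ∑ f ∈ E.erase e, (if (e ∩ f).Nonempty then q ^ (p + 1) else 0) :=
        Finset.sum_le_sum fun e he => Finset.sum_le_sum (hterm e he)
    _ = ∑ e ∈ E, (((E.erase e).filter (fun f => (e ∩ f).Nonempty)).card : ℝ) * q ^ (p + 1) := by
        refine Finset.sum_congr rfl fun e _ => ?_
        rw [← Finset.sum_filter, Finset.sum_const, nsmul_eq_mul]
    _ = ((∑ e ∈ E, ((E.erase e).filter (fun f => (e ∩ f).Nonempty)).card : ℕ) : ℝ)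
          * q ^ (p + 1) := by
        rw [Nat.cast_sum, Finset.sum_mul]
    _ ≤ ((∑ v : V, (E.filter (fun e => v ∈ e)).card
          * ((E.filter (fun e => v ∈ e)).card - 1) : ℕ) : ℝ) * q ^ (p + 1) := by
        refine mul_le_mul_of_nonneg_right ?_ hqp1
        exact_mod_cast aux_count E
    _ ≤ (∑ v : V, (d v : ℝ) * ((d v : ℝ) - 1)) * q ^ (p + 1) := by
        refine mul_le_mul_of_nonneg_right ?_ hqp1
        rw [Nat.cast_sum]
        refine Finset.sum_le_sum fun v _ => ?_
        rw [← hd v]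
        rcases Nat.eq_zero_or_pos (d v) with h | h
        · simp [h]
        · rw [Nat.cast_mul, Nat.cast_sub h, Nat.cast_one]
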